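/- Let k and r be positive integers with r < k and let p = (p_1,…,p_k) be a tuple of non-negative integers with S_{p,r} non-empty. Let (S,f) be uniformly distributed on Ω. Then the probability that G_γ(S,f) is a tree equals Σ_{π∈𝔖_k} sgn(π) Σ_{D⊆[k−1]} (−1)^{|D|} Pr( ∩_{i∈[k−1]} J^{f(i)}_{c_i(D), π(i)+1} ), where for i∈[k−1] one sets c_i(D) = i−1 if i∈D and c_i(D) = i otherwise, all subscripts being taken cyclically modulo k (in particular J^t_{0,j} means J^t_{k,j} and π(i)+1 is taken modulo k). -/
import Mathlib


open Finset

/-- The cyclic interval `]i,j]` of `[k] = {1,…,k}`, realized inside `ZMod k`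
(the element `k` of `[k]` is represented by `0 : ZMod k`). -/
def cyc (k : ℕ) [NeZero k] (i j : ZMod k) : Finset (ZMod k) :=
  Finset.univ.filter fun x => 1 ≤ (x - i).val ∧ (x - i).val ≤ (j - i).val

/-- Membership in `𝒮_{p,r}` : each `j ∈ [k]` belongs to exactly `p j` of the sets `S_1,…,S_r`. -/
def SprMem (k r : ℕ) [NeZero k] (p : ZMod k → ℕ) (S : Fin r → Finset (ZMod k)) : Prop :=
  ∀ j : ZMod k, Nat.card {i : Fin r // j ∈ S i} = p j

/-- Membership in `ℳ_{p,r}` : member of `𝒮_{p,r}` all of whose sets are proper subsets of `[k]`. -/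
def MprMem (k r : ℕ) [NeZero k] (p : ZMod k → ℕ) (S : Fin r → Finset (ZMod k)) : Prop :=
  SprMem k r p S ∧ ∀ i, S i ≠ Finset.univ

/-- `|ℳ_{p,r}|`. -/
noncomputable def Mcard (k r : ℕ) [NeZero k] (p : ZMod k → ℕ) : ℕ :=
  Nat.card {S : Fin r → Finset (ZMod k) // MprMem k r p S}

/-- `|𝒮_{p,r}|`. -/
noncomputable def Scard (k r : ℕ) [NeZero k] (p : ZMod k → ℕ) : ℕ :=
  Nat.card {S : Fin r → Finset (ZMod k) // SprMem k r p S}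

/-- `|ℳ_{q,r}|` for an integer-valued tuple `q` (empty if some entry of `q` is negative). -/
noncomputable def McardZ (k r : ℕ) [NeZero k] (q : ZMod k → ℤ) : ℕ :=
  Nat.card {S : Fin r → Finset (ZMod k) //
    (∀ j : ZMod k, (Nat.card {i : Fin r // j ∈ S i} : ℤ) = q j) ∧ ∀ i, S i ≠ Finset.univ}

/-- `alphaRel k S i j` holds iff `j = α(i,S)`. -/
def alphaRel (k : ℕ) [NeZero k] (S : Finset (ZMod k)) (i j : ZMod k) : Prop :=
  if S = Finset.univ then j = i else j ∉ S ∧ cyc k i (j - 1) ⊆ S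

/-- `betaRel k S i j` holds iff `j = β(i,S)`. -/
def betaRel (k : ℕ) [NeZero k] (S : Finset (ZMod k)) (i j : ZMod k) : Prop :=
  if S = Finset.univ then j = i else j + 1 ∉ S ∧ cyc k i j ⊆ S

/-- `gammaRel k S i j` holds iff `j = γ(i,S)`. -/
def gammaRel (k : ℕ) [NeZero k] (S : Finset (ZMod k)) (i j : ZMod k) : Prop :=
  if S = Finset.univ then j = i
  else if i ∈ S then j = i - 1
  else j + 1 ∉ S ∧ cyc k i j ⊆ S

/-- The digraph on `[k]` with the `k-1` arcs `(i, ζ(i, S_{f i}))` for `i ∈ [k-1]`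
(the nonzero elements of `ZMod k`) is a tree, i.e. a spanning tree oriented toward
the root `k` (represented by `0`): following the arcs from any vertex reaches the root. -/
def GIsTree (k r : ℕ) [NeZero k] (zeta : Finset (ZMod k) → ZMod k → ZMod k → Prop)
    (S : Fin r → Finset (ZMod k)) (f : {i : ZMod k // i ≠ 0} → Fin r) : Prop :=
  ∃ g : ZMod k → ZMod k, g 0 = 0 ∧
    (∀ i : {i : ZMod k // i ≠ 0}, zeta (S (f i)) i.1 (g i.1)) ∧
    ∀ x : ZMod k, ∃ n : ℕ, g^[n] x = 0

/-- Sample space: pairs of a tuple `S ∈ ℳ_{p,r}` and a surjection `f : [k-1] → [r]`,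
with the uniform probability measure. -/
abbrev OmM (k r : ℕ) [NeZero k] (p : ZMod k → ℕ) : Type :=
  {om : (Fin r → Finset (ZMod k)) × ({i : ZMod k // i ≠ 0} → Fin r) //
    MprMem k r p om.1 ∧ Function.Surjective om.2}

/-- Sample space `Ω`: pairs of a tuple `S ∈ 𝒮_{p,r}` and a surjection `f : [k-1] → [r]`,
with the uniform probability measure. -/
abbrev OmS (k r : ℕ) [NeZero k] (p : ZMod k → ℕ) : Type :=
  {om : (Fin r → Finset (ZMod k)) × ({i : ZMod k // i ≠ 0} → Fin r) //
    SprMem k r p om.1 ∧ Function.Surjective om.2}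

/-- Uniform probability of an event `A` in a (finite) sample space `Om`. -/
noncomputable def PrU {Om : Type} (A : Set Om) : ℚ :=
  (Nat.card A : ℚ) / (Nat.card Om : ℚ)

/-- The `Pr`-determinant of a `k × k` matrix of events (rows and columns indexed by
`[k]`, i.e. by `ZMod k`). -/
noncomputable def Pdet {k : ℕ} [NeZero k] {Om : Type} (E : ZMod k → ZMod k → Set Om) : ℚ :=
  ∑ pi : Equiv.Perm (ZMod k), ((Equiv.Perm.sign pi : ℤ) : ℚ) * PrU (⋂ i : ZMod k, E i (pi i))

/-- The matrix of events `M_α`: `M_{α,i,j} = I^{f(i)}_{i,j}` for `i ∈ [k-1]`, and the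
row of `i = k` (i.e. `0`) is constant equal to `Ω`. -/
def Malpha (k r : ℕ) [NeZero k] (p : ZMod k → ℕ) (i j : ZMod k) : Set (OmS k r p) :=
  {om : OmS k r p | ∀ hi : i ≠ 0, cyc k i j ⊆ om.1.1 (om.1.2 ⟨i, hi⟩)}

/-- The matrix of events `M_β`: `M_{β,i,j} = J^{f(i)}_{i,j+1}` for `i ∈ [k-1]`, and the
row of `i = k` (i.e. `0`) is constant equal to `Ω`. -/
def Mbeta (k r : ℕ) [NeZero k] (p : ZMod k → ℕ) (i j : ZMod k) : Set (OmS k r p) :=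
  {om : OmS k r p | ∀ hi : i ≠ 0,
    if i = j + 1 then om.1.1 (om.1.2 ⟨i, hi⟩) = Finset.univ
    else cyc k i (j + 1) ⊆ om.1.1 (om.1.2 ⟨i, hi⟩)}

/-- Membership of `om` in the event `J^{f(i)}_{a,b}`. -/
def Jmem (k r : ℕ) [NeZero k] (p : ZMod k → ℕ) (om : OmS k r p)
    (i : {i : ZMod k // i ≠ 0}) (a b : ZMod k) : Prop :=
  if a = b then om.1.1 (om.1.2 i) = Finset.univ else cyc k a b ⊆ om.1.1 (om.1.2 i)


section Toolkit
variable {k : ℕ} [NeZero k]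

lemma mem_cyc {i j x : ZMod k} :
    x ∈ cyc k i j ↔ 1 ≤ (x - i).val ∧ (x - i).val ≤ (j - i).val := by
  simp [cyc]

lemma zval_add_one {x : ZMod k} (hk : 1 < k) (h : x + 1 ≠ 0) : (x + 1).val = x.val + 1 := by
  haveI : Fact (1 < k) := ⟨hk⟩
  have h1 : (1 : ZMod k).val = 1 := ZMod.val_one k
  rw [ZMod.val_add, h1]
  have hx : x.val < k := ZMod.val_lt x
  rcases eq_or_lt_of_le (Nat.succ_le_of_lt hx) with he | hl
  · exfalso
    apply h
    rw [← ZMod.val_eq_zero, ZMod.val_add, h1, show x.val + 1 = k from he, Nat.mod_self]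
  · exact Nat.mod_eq_of_lt hl

lemma zval_eq_last {x : ZMod k} (hk : 1 < k) (h : x + 1 = 0) : x.val = k - 1 := by
  have hv := ZMod.val_lt x
  have h2 : ((x.val + 1 : ℕ) : ZMod k) = 0 := by
    push_cast
    rw [ZMod.natCast_zmod_val]
    exact h
  rw [ZMod.natCast_eq_zero_iff] at h2
  have := Nat.le_of_dvd (by omega) h2
  omega

lemma zval_last_eq {x : ZMod k} (hk : 1 < k) (h : x.val = k - 1) : x + 1 = 0 := by
  rw [← ZMod.val_eq_zero, ZMod.val_add]
  haveI : Fact (1 < k) := ⟨hk⟩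
  rw [ZMod.val_one, h, Nat.sub_add_cancel (by omega), Nat.mod_self]

omit [NeZero k] in
lemma zval_sub_eq_zero_iff {x y : ZMod k} : x - y = 0 ↔ x = y := sub_eq_zero

/-- `cyc` is monotone in the right endpoint (measured from `a`). -/
lemma cyc_subset_cyc {a b c : ZMod k} (h : (b - a).val ≤ (c - a).val) :
    cyc k a b ⊆ cyc k a c := by
  intro x hx
  rw [mem_cyc] at *
  exact ⟨hx.1, le_trans hx.2 h⟩

end Toolkit

section Beta
variable {k : ℕ} [NeZero k]

lemma vinj {x y : ZMod k} (h : x.val = y.val) : x = y := ZMod.val_injective k h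

lemma succ_mem_cyc (hk : 1 < k) {a T b : ZMod k} (h : (T - a).val < (b - a).val) :
    T + 1 ∈ cyc k a b := by
  rw [mem_cyc]
  by_cases hc : T - a + 1 = 0
  · have h1 := zval_eq_last hk hc
    have h2 := ZMod.val_lt (b - a)
    omega
  · have hv : (T + 1 - a) = (T - a) + 1 := by ring
    rw [hv, zval_add_one hk hc]
    omega

lemma beta_exists (hk : 1 < k) {S : Finset (ZMod k)} (hS : S ≠ Finset.univ) (a : ZMod k) :
    ∃ T, cyc k a T ⊆ S ∧ T + 1 ∉ S := by
  have hne : (Finset.univ.filter fun b => cyc k a b ⊆ S).Nonempty := by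
    refine ⟨a, ?_⟩
    simp only [mem_filter, mem_univ, true_and]
    intro x hx
    rw [mem_cyc, sub_self, ZMod.val_zero] at hx
    omega
  obtain ⟨T, hTmem, hTmax⟩ := Finset.exists_max_image _ (fun b => (b - a).val) hne
  rw [mem_filter] at hTmem
  refine ⟨T, hTmem.2, ?_⟩
  intro hT1S
  by_cases hc : T - a + 1 = 0
  · -- then T + 1 = a and S = univ
    apply hS
    rw [Finset.eq_univ_iff_forall]
    intro x
    by_cases hxa : x = a
    · subst hxa
      have : T + 1 = x := by
        have := hc
        rwa [sub_add_eq_add_sub, sub_eq_zero] at this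
      rwa [this] at hT1S
    · apply hTmem.2
      rw [mem_cyc]
      have h1 : (x - a).val ≠ 0 := by
        rw [Ne, ZMod.val_eq_zero]
        intro h
        exact hxa (sub_eq_zero.1 h)
      have h2 := ZMod.val_lt (x - a)
      have h3 := zval_eq_last hk hc
      omega
  · -- extend the run
    have hmem : T + 1 ∈ Finset.univ.filter fun b => cyc k a b ⊆ S := by
      simp only [mem_filter, mem_univ, true_and]
      intro x hx
      rw [mem_cyc] at hx
      have hv : (T + 1 - a) = (T - a) + 1 := by ring
      rw [hv, zval_add_one hk hc] at hx
      rcases Nat.lt_or_ge (x - a).val ((T - a).val + 1) with h | h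
      · exact hTmem.2 (mem_cyc.2 ⟨hx.1, by omega⟩)
      · have hxv : (x - a).val = ((T - a) + 1).val := by
          rw [zval_add_one hk hc]; omega
        have : x - a = T + 1 - a := by
          rw [hv]; exact vinj hxv
        rw [sub_left_inj] at this
        rwa [this]
    have := hTmax _ hmem
    have hv : (T + 1 - a) = (T - a) + 1 := by ring
    rw [hv, zval_add_one hk hc] at this
    omega

lemma beta_unique (hk : 1 < k) {S : Finset (ZMod k)} {a T T' : ZMod k}
    (h1 : cyc k a T ⊆ S) (h2 : T + 1 ∉ S) (h3 : cyc k a T' ⊆ S) (h4 : T' + 1 ∉ S) :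
    T = T' := by
  have key : ∀ {X Y : ZMod k}, cyc k a Y ⊆ S → X + 1 ∉ S →
      (X - a).val < (Y - a).val → False := by
    intro X Y hY hX h
    exact hX (hY (succ_mem_cyc hk h))
  have : (T - a).val = (T' - a).val := by
    rcases Nat.lt_trichotomy (T - a).val ((T' - a).val) with h | h | h
    · exact absurd (key h3 h2 h) (fun h => h)
    · exact h
    · exact absurd (key h1 h4 h) (fun h => h)
  have := vinj this
  rwa [sub_left_inj] at this

lemma phi_iff (hk : 1 < k) {S : Finset (ZMod k)} (hS : S ≠ Finset.univ) {a T : ZMod k}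
    (h1 : cyc k a T ⊆ S) (h2 : T + 1 ∉ S) (b : ZMod k) :
    (if a = b then S = Finset.univ else cyc k a b ⊆ S) ↔ b ∈ cyc k a T := by
  by_cases hab : a = b
  · subst hab
    simp only [if_pos rfl, mem_cyc, sub_self, ZMod.val_zero]
    constructor
    · intro h; exact absurd h hS
    · intro h; omega
  · rw [if_neg hab]
    constructor
    · intro hsub
      rw [mem_cyc]
      have hb1 : (b - a).val ≠ 0 := by
        rw [Ne, ZMod.val_eq_zero]
        intro h
        exact hab (sub_eq_zero.1 h).symm
      refine ⟨by omega, ?_⟩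
      by_contra hgt
      push_neg at hgt
      exact h2 (hsub (succ_mem_cyc hk hgt))
    · intro hb
      exact fun x hx => h1 (cyc_subset_cyc (mem_cyc.1 hb).2 hx)

lemma cyc_diff (hk : 1 < k) (a T b : ZMod k) :
    ((if b ∈ cyc k a T then (1 : ℚ) else 0) - if b + 1 ∈ cyc k a T then 1 else 0)
      = (if b = T then 1 else 0) - if b = a then 1 else 0 := by
  have e1 : (b = T) ↔ (b - a).val = (T - a).val := by
    constructor
    · rintro rfl; rfl
    · intro h
      have := vinj h
      rwa [sub_left_inj] at this
  have e2 : (b = a) ↔ (b - a).val = 0 := by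
    rw [ZMod.val_eq_zero, sub_eq_zero]
  have hL := ZMod.val_lt (T - a)
  have hu := ZMod.val_lt (b - a)
  by_cases hc : b - a + 1 = 0
  · have h0 : b + 1 - a = 0 := by rw [← hc]; ring
    have hlast := zval_eq_last hk hc
    simp only [mem_cyc, h0, ZMod.val_zero, e1, e2, hlast]
    split_ifs <;> first | omega | norm_num
  · have hbu : b + 1 - a = (b - a) + 1 := by ring
    simp only [mem_cyc, hbu, zval_add_one hk hc, e1, e2]
    have hne : (b - a).val ≠ k - 1 := by
      intro h
      exact hc (zval_last_eq hk h)
    split_ifs <;> first | omega | norm_num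

end Beta

section DetPart
variable {k : ℕ} [NeZero k]

/-- The matrix `1 - A_g` on the nonzero indices. -/
noncomputable def Mg (k : ℕ) [NeZero k] (g : ZMod k → ZMod k) :
    Matrix {x : ZMod k // x ≠ 0} {x : ZMod k // x ≠ 0} ℚ :=
  Matrix.of fun i m => (if i = m then 1 else 0) - (if m.1 = g i.1 then 1 else 0)

lemma detMg_eq_one {g : ZMod k → ZMod k}
    (h : ∀ x, ∃ n, g^[n] x = 0) : (Mg k g).det = 1 := by
  classical
  let d : ZMod k → ℕ := fun x => Nat.find (h x)
  have hd0 : ∀ x, g^[d x] x = 0 := fun x => Nat.find_spec (h x)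
  have hdlt : ∀ i : {x : ZMod k // x ≠ 0}, d (g i.1) < d i.1 := by
    rintro ⟨x, hx⟩
    show d (g x) < d x
    have h1 : d x ≠ 0 := by
      intro h0
      apply hx
      have := hd0 x
      rwa [h0, Function.iterate_zero_apply] at this
    have h2 : g^[d x - 1] (g x) = 0 := by
      have h3 := hd0 x
      rwa [← Nat.succ_pred_eq_of_pos (Nat.pos_of_ne_zero h1),
        Function.iterate_succ_apply] at h3
    have h4 : d (g x) ≤ d x - 1 := Nat.find_le h2
    omega
  set key : {x : ZMod k // x ≠ 0} → ℕ := fun i => d i.1 * k + i.1.val with hkey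
  have hinj : Function.Injective key := by
    rintro a b hab
    have ha := ZMod.val_lt a.1
    have hb := ZMod.val_lt b.1
    simp only [hkey] at hab
    have h1 : d a.1 = d b.1 := by
      rcases Nat.lt_trichotomy (d a.1) (d b.1) with h | h | h
      · have h5 := Nat.mul_le_mul_right k (Nat.succ_le_of_lt h)
        rw [Nat.succ_mul] at h5
        omega
      · exact h
      · have h5 := Nat.mul_le_mul_right k (Nat.succ_le_of_lt h)
        rw [Nat.succ_mul] at h5
        omega
    rw [h1] at hab
    have h2 : a.1.val = b.1.val := by omega
    exact Subtype.ext (vinj h2)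
  letI : LinearOrder {x : ZMod k // x ≠ 0} := LinearOrder.lift' key hinj
  have hlt : ∀ a b : {x : ZMod k // x ≠ 0}, a < b ↔ key a < key b := by
    intro a b
    rw [lt_iff_le_not_ge, Nat.lt_iff_le_not_le]
    exact Iff.rfl
  have htri : (Mg k g).BlockTriangular OrderDual.toDual := by
    intro i j hij
    have hij' : i < j := hij
    rw [hlt] at hij'
    have hne : i ≠ j := by
      intro h; subst h; exact lt_irrefl _ hij'
    have hgne : j.1 ≠ g i.1 := by
      intro h
      have h5 := Nat.mul_le_mul_right k (Nat.succ_le_of_lt (hdlt i))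
      rw [Nat.succ_mul] at h5
      have h6 : key j = d (g i.1) * k + (g i.1).val := by
        simp only [hkey, h]
      have h7 : key i = d i.1 * k + i.1.val := rfl
      have h8 := ZMod.val_lt (g i.1)
      omega
    simp [Mg, hne, hgne]
  rw [Matrix.det_of_lowerTriangular _ htri]
  apply Finset.prod_eq_one
  intro i _
  have hgi : g i.1 ≠ i.1 := by
    intro h
    have := hdlt i
    rw [h] at this
    omega
  simp [Mg, Ne.symm hgi]

lemma detMg_eq_zero {g : ZMod k → ZMod k}
    (h : ¬ ∀ x : ZMod k, ∃ n, g^[n] x = 0) : (Mg k g).det = 0 := by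
  classical
  push_neg at h
  obtain ⟨x₀, hx₀⟩ := h
  set ι := {x : ZMod k // x ≠ 0}
  let o : ℕ → ι := fun n => ⟨g^[n] x₀, hx₀ n⟩
  have hcard : Fintype.card ι < Fintype.card (Fin (Fintype.card ι + 1)) := by simp
  obtain ⟨a, b, hab, heq⟩ :=
    Fintype.exists_ne_map_eq_of_card_lt (fun n : Fin (Fintype.card ι + 1) => o n.val) hcard
  have hwlog : ∀ s t : ℕ, s < t → o s = o t → (Mg k g).det = 0 := by
    intro s t hst hsteq
    let v : ι → ℚ := fun j => (((Finset.Ico s t).filter (fun n => o n = j)).card : ℚ)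
    have hexp : ∀ i : ι, v i = ∑ n ∈ Finset.Ico s t, (if o n = i then (1 : ℚ) else 0) := by
      intro i
      simp only [v, Finset.card_filter]
      push_cast
      rfl
    have hv0 : v ≠ 0 := by
      intro hv
      have h1 := congrFun hv (o s)
      simp only [v, Pi.zero_apply, Nat.cast_eq_zero, Finset.card_eq_zero,
        Finset.filter_eq_empty_iff] at h1
      exact h1 (Finset.mem_Ico.2 ⟨le_refl s, hst⟩) rfl
    have hvM : Matrix.vecMul v (Mg k g) = 0 := by
      funext j
      have hsplit : (Matrix.vecMul v (Mg k g)) j =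
          v j - ∑ i : ι, v i * (if j.1 = g i.1 then 1 else 0) := by
        simp only [Matrix.vecMul, dotProduct, Mg, Matrix.of_apply, mul_sub]
        rw [Finset.sum_sub_distrib]
        congr 1
        rw [Finset.sum_eq_single j]
        · simp
        · intro b _ hb
          simp [hb]
        · intro hb; exact absurd (Finset.mem_univ _) hb
      have h2 : ∑ i : ι, v i * (if j.1 = g i.1 then 1 else 0)
          = ∑ n ∈ Finset.Ico s t, (if o (n + 1) = j then (1 : ℚ) else 0) := by
        simp_rw [hexp, Finset.sum_mul]
        rw [Finset.sum_comm]
        apply Finset.sum_congr rfl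
        intro n _
        rw [Finset.sum_eq_single (o n)]
        · rw [if_pos rfl, one_mul]
          have hgo : (o (n + 1)).1 = g (o n).1 := Function.iterate_succ_apply' g n x₀
          have hiff : (j.1 = g (o n).1) ↔ (o (n + 1) = j) := by
            rw [← hgo, Subtype.ext_iff, eq_comm]
          rw [if_congr hiff rfl rfl]
        · intro b _ hb
          simp [Ne.symm hb]
        · intro hb; exact absurd (Finset.mem_univ _) hb
      have h3 : ∑ n ∈ Finset.Ico s t, (if o (n + 1) = j then (1 : ℚ) else 0)
          = ∑ n ∈ Finset.Ico s t, (if o n = j then (1 : ℚ) else 0) := by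
        have e0 : ∑ n ∈ Finset.Ico s t, (if o (n + 1) = j then (1 : ℚ) else 0)
            = ∑ n ∈ Finset.Ico (s + 1) (t + 1), (if o n = j then (1 : ℚ) else 0) := by
          rw [← Finset.map_add_right_Ico _ _ 1, Finset.sum_map]
          rfl
        rw [e0, Finset.sum_Ico_succ_top (by omega), Finset.sum_eq_sum_Ico_succ_bot hst]
        rw [hsteq]
        ring
      rw [hsplit, h2, h3, ← hexp j, sub_self]
      rfl
    exact Matrix.exists_vecMul_eq_zero_iff.1 ⟨v, hv0, hvM⟩
  rcases Nat.lt_trichotomy a.val b.val with h | h | h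
  · exact hwlog _ _ h heq
  · exact absurd (Fin.ext h) hab
  · exact hwlog _ _ h heq.symm

end DetPart

section DetE

variable {k : ℕ} [NeZero k]

lemma zmod_fin_equiv_sign (hk : 1 < k) :
    ((Equiv.Perm.sign (Equiv.subRight (1 : ZMod k)) : ℤ) : ℚ) = (-1) ^ (k - 1) := by
  obtain ⟨n, rfl⟩ : ∃ n, k = n + 1 := ⟨k - 1, by omega⟩
  let e : ZMod (n + 1) ≃ Fin (n + 1) :=
    { toFun := fun x => ⟨x.val, ZMod.val_lt x⟩
      invFun := fun i => (i.1 : ZMod (n + 1))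
      left_inv := fun x => ZMod.natCast_zmod_val x
      right_inv := fun i => Fin.ext (ZMod.val_cast_of_lt i.2) }
  have hperm : e.permCongr (Equiv.addRight (1 : ZMod (n + 1))) = finRotate (n + 1) := by
    ext i
    show (e ((e.symm i) + 1)).val = (finRotate (n + 1) i).val
    rw [finRotate_succ_apply]
    show ZMod.val ((i.1 : ZMod (n + 1)) + 1) = (i + 1).val
    have h1 : ((i.1 : ZMod (n + 1)) + 1) = ((i.1 + 1 : ℕ) : ZMod (n + 1)) := by push_cast; ring
    rw [h1, ZMod.val_natCast]
    rw [Fin.val_add]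
    have h2 : (1 : Fin (n + 1)).val = 1 % (n + 1) := by
      simp [Fin.val_one']
    rw [h2, Nat.mod_eq_of_lt hk]
  have hsub : (Equiv.subRight (1 : ZMod (n + 1))) = (Equiv.addRight (1 : ZMod (n + 1)))⁻¹ := by
    ext x
    simp [Equiv.subRight, Equiv.addRight, Equiv.Perm.inv_def]
    exact sub_eq_add_neg x 1
  rw [hsub, Equiv.Perm.sign_inv]
  have := Equiv.Perm.sign_permCongr e (Equiv.addRight (1 : ZMod (n + 1)))
  rw [hperm] at this
  rw [← this, sign_finRotate]
  simp

lemma det_E (hk : 1 < k) (g : ZMod k → ZMod k)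
    (E : Matrix (ZMod k) (ZMod k) ℚ)
    (hE0 : ∀ m, E 0 m = 1)
    (hEd : ∀ i, i ≠ 0 → ∀ m, E i m - E i (m + 1) =
      (if m = g i - 1 then 1 else 0) - (if m = i - 1 then 1 else 0)) :
    E.det = (Mg k g).det := by
  classical
  haveI : Fact (1 < k) := ⟨hk⟩
  set V : Matrix (ZMod k) (ZMod k) ℚ :=
    Matrix.of (fun j m => (if j = m then (1 : ℚ) else 0) -
      (if m + 1 ≠ 0 ∧ j = m + 1 then 1 else 0)) with hV
  have hdetV : V.det = 1 := by
    letI : LinearOrder (ZMod k) := LinearOrder.lift' ZMod.val (ZMod.val_injective k)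
    have hlt : ∀ a b : ZMod k, a < b ↔ a.val < b.val := fun a b => by
      rw [lt_iff_le_not_ge, Nat.lt_iff_le_not_le]; exact Iff.rfl
    have htri : V.BlockTriangular OrderDual.toDual := by
      intro i j hij
      have hij' : i < j := hij
      rw [hlt] at hij'
      have h1 : i ≠ j := fun h => by subst h; exact lt_irrefl _ hij'
      have h2 : ¬(j + 1 ≠ 0 ∧ i = j + 1) := by
        rintro ⟨hj0, rfl⟩
        rw [zval_add_one hk hj0] at hij'
        omega
      simp [hV, h1, h2]
    rw [Matrix.det_of_lowerTriangular _ htri]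
    apply Finset.prod_eq_one
    intro m _
    have h2 : ¬(m + 1 ≠ 0 ∧ m = m + 1) := by
      rintro ⟨-, hm⟩
      exact one_ne_zero (left_eq_add.mp hm)
    simp [hV, h2]
  have hEV : ∀ i m, (E * V) i m = E i m - (if m + 1 = 0 then 0 else E i (m + 1)) := by
    intro i m
    simp only [Matrix.mul_apply, hV, Matrix.of_apply, mul_sub]
    rw [Finset.sum_sub_distrib]
    congr 1
    · rw [Finset.sum_eq_single m]
      · simp
      · intro b _ hb; simp [hb]
      · intro hb; exact absurd (Finset.mem_univ _) hb
    · by_cases hm : m + 1 = 0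
      · simp [hm]
      · rw [if_neg hm]
        rw [Finset.sum_eq_single (m + 1)]
        · simp [hm]
        · intro b _ hb; simp [hb]
        · intro hb; exact absurd (Finset.mem_univ _) hb
  set σ : Equiv.Perm (ZMod k) := Equiv.subRight (1 : ZMod k) with hσ
  set B : Matrix (ZMod k) (ZMod k) ℚ := (E * V).submatrix id σ with hB
  have hBapp : ∀ i m, B i m = E i (m - 1) - (if m = 0 then 0 else E i m) := by
    intro i m
    show (E * V) i (m - 1) = _
    rw [hEV]
    have h1 : m - 1 + 1 = m := by ring
    rw [h1]
  have hB0 : ∀ m, B 0 m = if m = 0 then 1 else 0 := by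
    intro m
    rw [hBapp, hE0]
    by_cases hm : m = 0
    · simp [hm]
    · simp [hm, hE0]
  have hBi : ∀ i, i ≠ 0 → ∀ m, m ≠ 0 →
      B i m = (if m = g i then 1 else 0) - (if m = i then 1 else 0) := by
    intro i hi m hm
    rw [hBapp, if_neg hm]
    have := hEd i hi (m - 1)
    have h1 : m - 1 + 1 = m := by ring
    rw [h1] at this
    rw [this]
    have e1 : (m - 1 = g i - 1) ↔ (m = g i) := sub_left_inj
    have e2 : (m - 1 = i - 1) ↔ (m = i) := sub_left_inj
    rw [if_congr e1 rfl rfl, if_congr e2 rfl rfl]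
  -- block decomposition
  haveI : Unique {x : ZMod k // x = 0} :=
    ⟨⟨⟨0, rfl⟩⟩, by rintro ⟨x, hx⟩; exact Subtype.ext hx⟩
  set ee := Equiv.sumCompl (fun x : ZMod k => x = 0) with hee
  have hsub : B.submatrix ee ee =
      Matrix.fromBlocks (Matrix.of fun _ _ => (1 : ℚ)) 0
        (Matrix.of fun (i : {x : ZMod k // ¬x = 0}) (_ : {x : ZMod k // x = 0}) => B i.1 0)
        (Matrix.of fun (i m : {x : ZMod k // ¬x = 0}) =>
          (if m.1 = g i.1 then (1 : ℚ) else 0) - (if m.1 = i.1 then 1 else 0)) := by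
    ext x y
    cases x with
    | inl x =>
      cases y with
      | inl y =>
        simp only [Matrix.submatrix_apply, hee, Equiv.sumCompl_apply_inl,
          Matrix.fromBlocks_apply₁₁, Matrix.of_apply]
        rw [x.2, y.2, hB0]
        simp
      | inr y =>
        simp only [Matrix.submatrix_apply, hee, Equiv.sumCompl_apply_inl,
          Equiv.sumCompl_apply_inr, Matrix.fromBlocks_apply₁₂, Matrix.zero_apply]
        rw [x.2, hB0, if_neg y.2]
    | inr x =>
      cases y with
      | inl y =>
        simp only [Matrix.submatrix_apply, hee, Equiv.sumCompl_apply_inl,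
          Equiv.sumCompl_apply_inr, Matrix.fromBlocks_apply₂₁, Matrix.of_apply]
        rw [y.2]
      | inr y =>
        simp only [Matrix.submatrix_apply, hee, Equiv.sumCompl_apply_inr,
          Matrix.fromBlocks_apply₂₂, Matrix.of_apply]
        rw [hBi x.1 x.2 y.1 y.2]
  have hdetB : B.det = ((Equiv.Perm.sign σ : ℤ) : ℚ) * E.det := by
    rw [hB, Matrix.det_permute' σ (E * V), Matrix.det_mul, hdetV, mul_one]
  have hcard : Fintype.card {x : ZMod k // ¬x = 0} = k - 1 := by
    have h1 : Fintype.card {x : ZMod k // x = 0} = 1 := Fintype.card_unique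
    have h2 := Fintype.card_subtype_compl (fun x : ZMod k => x = 0)
    rw [h1, ZMod.card] at h2
    exact h2
  have hdetD : (Matrix.of fun (i m : {x : ZMod k // ¬x = 0}) =>
      (if m.1 = g i.1 then (1 : ℚ) else 0) - (if m.1 = i.1 then 1 else 0)).det
      = (-1) ^ (k - 1) * (Mg k g).det := by
    have hD : (Matrix.of fun (i m : {x : ZMod k // ¬x = 0}) =>
        (if m.1 = g i.1 then (1 : ℚ) else 0) - (if m.1 = i.1 then 1 else 0))
        = -(Mg k g) := by
      ext i m
      simp only [Matrix.of_apply, Matrix.neg_apply, Mg, neg_sub]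
      have e1 : (m.1 = i.1) ↔ (i = m) := by
        rw [Subtype.ext_iff, eq_comm]
      rw [if_congr e1 rfl rfl]
    rw [hD, Matrix.det_neg, hcard]
  have hdetBblocks : B.det = (-1) ^ (k - 1) * (Mg k g).det := by
    rw [← Matrix.det_submatrix_equiv_self ee B, hsub, Matrix.det_fromBlocks_zero₁₂]
    rw [hdetD]
    have : (Matrix.of fun (_ _ : {x : ZMod k // x = 0}) => (1 : ℚ)).det = 1 := by
      rw [Matrix.det_unique]
      rfl
    rw [this, one_mul]
  have hsign := zmod_fin_equiv_sign (k := k) hk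
  have hs2 : ((Equiv.Perm.sign σ : ℤ) : ℚ) * ((Equiv.Perm.sign σ : ℤ) : ℚ) = 1 := by
    rw [hσ, hsign]
    rw [← pow_add]
    rw [← two_mul, pow_mul]
    norm_num
  have := hdetB
  rw [hdetBblocks] at this
  have h9 : E.det = ((Equiv.Perm.sign σ : ℤ) : ℚ) * ((-1) ^ (k - 1) * (Mg k g).det) := by
    have := congrArg (fun x => ((Equiv.Perm.sign σ : ℤ) : ℚ) * x) this.symm
    simpa [← mul_assoc, hs2] using this
  rw [h9, hσ, hsign, ← mul_assoc, ← pow_add, ← two_mul, pow_mul]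
  norm_num
end DetE


section Gamma
variable {k : ℕ} [NeZero k]

lemma gamma_existsUnique (hk : 1 < k) (S : Finset (ZMod k)) (i : ZMod k) :
    ∃! j, gammaRel k S i j := by
  unfold gammaRel
  by_cases hu : S = Finset.univ
  · simp only [if_pos hu]
    exact ⟨i, rfl, fun y hy => hy⟩
  · simp only [if_neg hu]
    by_cases hi : i ∈ S
    · simp only [if_pos hi]
      exact ⟨i - 1, rfl, fun y hy => hy⟩
    · simp only [if_neg hi]
      obtain ⟨T, hT1, hT2⟩ := beta_exists hk hu i
      exact ⟨T, ⟨hT2, hT1⟩, fun y hy => beta_unique hk hy.2 hy.1 hT1 hT2⟩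

noncomputable def gfun (k : ℕ) [NeZero k] (hk : 1 < k)
    (Sf : {i : ZMod k // i ≠ 0} → Finset (ZMod k)) : ZMod k → ZMod k :=
  fun x => if hx : x = 0 then 0 else (gamma_existsUnique hk (Sf ⟨x, hx⟩) x).exists.choose

lemma gfun_zero (hk : 1 < k) (Sf : {i : ZMod k // i ≠ 0} → Finset (ZMod k)) :
    gfun k hk Sf 0 = 0 := dif_pos rfl

lemma gfun_spec (hk : 1 < k) (Sf : {i : ZMod k // i ≠ 0} → Finset (ZMod k))
    (i : {i : ZMod k // i ≠ 0}) :
    gammaRel k (Sf i) i.1 (gfun k hk Sf i.1) := by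
  have h := (gamma_existsUnique hk (Sf ⟨i.1, i.2⟩) i.1).exists.choose_spec
  unfold gfun
  rw [dif_neg i.2]
  exact h

lemma gIsTree_iff (hk : 1 < k) {r : ℕ} (S : Fin r → Finset (ZMod k))
    (f : {i : ZMod k // i ≠ 0} → Fin r) :
    GIsTree k r (gammaRel k) S f ↔
      ∀ x : ZMod k, ∃ n : ℕ, (gfun k hk (fun i => S (f i)))^[n] x = 0 := by
  constructor
  · rintro ⟨g, hg0, hgrel, hreach⟩
    have hgg : g = gfun k hk (fun i => S (f i)) := by
      funext x
      by_cases hx : x = 0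
      · rw [hx, hg0, gfun_zero]
      · exact ExistsUnique.unique (gamma_existsUnique hk (S (f ⟨x, hx⟩)) x)
          (hgrel ⟨x, hx⟩) (gfun_spec hk (fun i => S (f i)) ⟨x, hx⟩)
    rw [← hgg]
    exact hreach
  · intro h
    exact ⟨gfun k hk (fun i => S (f i)), gfun_zero hk _, gfun_spec hk _, h⟩

end Gamma

section RowDiff
variable {k : ℕ} [NeZero k]

lemma cyc_empty_self (a : ZMod k) : cyc k a a = ∅ := by
  ext x
  rw [mem_cyc, sub_self, ZMod.val_zero]
  simp only [Finset.notMem_empty, iff_false, not_and, not_le]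
  intro h
  omega

lemma row_diff (hk : 1 < k) (SS : Finset (ZMod k)) {i gi : ZMod k}
    (hgamma : gammaRel k SS i gi) (m : ZMod k) :
    (((if (if i = m + 1 then SS = Finset.univ else cyc k i (m + 1) ⊆ SS) then (1 : ℚ) else 0)
      - (if (if i - 1 = m + 1 then SS = Finset.univ else cyc k (i - 1) (m + 1) ⊆ SS)
          then 1 else 0))
     - ((if (if i = m + 1 + 1 then SS = Finset.univ else cyc k i (m + 1 + 1) ⊆ SS)
          then (1 : ℚ) else 0)
      - (if (if i - 1 = m + 1 + 1 then SS = Finset.univ else cyc k (i - 1) (m + 1 + 1) ⊆ SS)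
          then 1 else 0)))
    = (if m = gi - 1 then 1 else 0) - (if m = i - 1 then 1 else 0) := by
  unfold gammaRel at hgamma
  by_cases hu : SS = Finset.univ
  · rw [if_pos hu] at hgamma
    subst hgamma
    simp [hu, Finset.subset_univ]
  · rw [if_neg hu] at hgamma
    obtain ⟨Ti, hTi1, hTi2⟩ := beta_exists hk hu i
    obtain ⟨Tm, hTm1, hTm2⟩ := beta_exists hk hu (i - 1)
    have hφi : ∀ b, (if (if i = b then SS = Finset.univ else cyc k i b ⊆ SS) then (1 : ℚ) else 0)
        = (if b ∈ cyc k i Ti then 1 else 0) :=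
      fun b => if_congr (phi_iff hk hu hTi1 hTi2 b) rfl rfl
    have hφm : ∀ b, (if (if i - 1 = b then SS = Finset.univ else cyc k (i - 1) b ⊆ SS)
        then (1 : ℚ) else 0) = (if b ∈ cyc k (i - 1) Tm then 1 else 0) :=
      fun b => if_congr (phi_iff hk hu hTm1 hTm2 b) rfl rfl
    rw [hφi, hφi, hφm, hφm]
    have hregroup : ∀ a b c d : ℚ, (a - b) - (c - d) = (a - c) - (b - d) := by intros; ring
    rw [hregroup]
    rw [cyc_diff hk i Ti (m + 1), cyc_diff hk (i - 1) Tm (m + 1)]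
    by_cases hiS : i ∈ SS
    · rw [if_pos hiS] at hgamma
      subst hgamma
      -- Tm = Ti
      have hTine : Ti ≠ i - 1 := by
        intro h
        apply hu
        rw [Finset.eq_univ_iff_forall]
        intro x
        by_cases hxi : x = i
        · rwa [hxi]
        · apply hTi1
          rw [mem_cyc, h]
          have h1 : (i - 1 - i : ZMod k) = -1 := by ring
          have h1v : (-1 : ZMod k).val = k - 1 :=
            zval_eq_last hk (by ring)
          rw [h1, h1v]
          have h2 : (x - i).val ≠ 0 := by
            rw [Ne, ZMod.val_eq_zero, sub_eq_zero]
            exact hxi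
          have h3 := ZMod.val_lt (x - i)
          omega
      have hTm_eq : Tm = Ti := by
        apply beta_unique hk hTm1 hTm2
        · -- cyc (i-1) Ti ⊆ SS
          intro x hx
          rw [mem_cyc] at hx
          by_cases hxi : x = i
          · rwa [hxi]
          · have hx1 : x - (i - 1) = (x - i) + 1 := by ring
            have hT1 : Ti - (i - 1) = (Ti - i) + 1 := by ring
            have hxne : x - i + 1 ≠ 0 := by
              intro h
              have hxeq : x = i - 1 := by
                rw [sub_add_eq_add_sub, sub_eq_zero] at h
                rw [eq_sub_iff_add_eq]
                exact h
              rw [hxeq, show (i - 1 - (i - 1) : ZMod k) = 0 by ring, ZMod.val_zero] at hx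
              omega
            have hTne : Ti - i + 1 ≠ 0 := by
              intro h
              apply hTine
              rw [sub_add_eq_add_sub, sub_eq_zero] at h
              rw [eq_sub_iff_add_eq]
              exact h
            rw [hx1, hT1, zval_add_one hk hxne, zval_add_one hk hTne] at hx
            apply hTi1
            rw [mem_cyc]
            have h2 : (x - i).val ≠ 0 := by
              rw [Ne, ZMod.val_eq_zero, sub_eq_zero]
              exact hxi
            omega
        · exact hTi2
      subst hTm_eq
      have econd : ∀ c : ZMod k, (m + 1 = c) ↔ (m = c - 1) := fun c =>
        ⟨fun h => by rw [← h]; ring, fun h => by rw [h]; ring⟩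
      rw [if_congr (econd (i - 1)) rfl rfl, if_congr (econd i) rfl rfl]
      ring
    · rw [if_neg hiS] at hgamma
      have hTi_eq : Ti = gi := beta_unique hk hTi1 hTi2 hgamma.2 hgamma.1
      have hTm_eq : Tm = i - 1 := by
        apply beta_unique hk hTm1 hTm2
        · rw [cyc_empty_self]
          exact Finset.empty_subset _
        · rw [sub_add_cancel]
          exact hiS
      have econd : ∀ c : ZMod k, (m + 1 = c) ↔ (m = c - 1) := fun c =>
        ⟨fun h => by rw [← h]; ring, fun h => by rw [h]; ring⟩
      rw [hTi_eq, hTm_eq, if_congr (econd gi) rfl rfl, if_congr (econd i) rfl rfl]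
      ring

end RowDiff


section Pointwise
variable {k r : ℕ} [NeZero k]

open scoped Classical in
lemma pointwise_det (hk : 1 < k) (p : ZMod k → ℕ) (om : OmS k r p)
    (pi : Equiv.Perm (ZMod k)) :
    ∑ D ∈ (Finset.univ : Finset {i : ZMod k // i ≠ 0}).powerset,
        (-1 : ℚ) ^ D.card *
          (if (∀ i : {i : ZMod k // i ≠ 0},
              Jmem k r p om i (if i ∈ D then i.1 - 1 else i.1) (pi i.1 + 1)) then (1 : ℚ) else 0)
      = ∏ i : {i : ZMod k // i ≠ 0},
          ((if Jmem k r p om i i.1 (pi i.1 + 1) then (1 : ℚ) else 0)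
            - (if Jmem k r p om i (i.1 - 1) (pi i.1 + 1) then (1 : ℚ) else 0)) := by
  classical
  have hPA := Finset.prod_add
    (fun i : {i : ZMod k // i ≠ 0} => -(if Jmem k r p om i (i.1 - 1) (pi i.1 + 1)
      then (1 : ℚ) else 0))
    (fun i : {i : ZMod k // i ≠ 0} => (if Jmem k r p om i i.1 (pi i.1 + 1)
      then (1 : ℚ) else 0)) Finset.univ
  have hL : ∏ i : {i : ZMod k // i ≠ 0},
      ((if Jmem k r p om i i.1 (pi i.1 + 1) then (1 : ℚ) else 0)
        - (if Jmem k r p om i (i.1 - 1) (pi i.1 + 1) then (1 : ℚ) else 0))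
      = ∏ i : {i : ZMod k // i ≠ 0},
        ((-(if Jmem k r p om i (i.1 - 1) (pi i.1 + 1) then (1 : ℚ) else 0))
          + (if Jmem k r p om i i.1 (pi i.1 + 1) then (1 : ℚ) else 0)) := by
    apply Finset.prod_congr rfl
    intro i _
    ring
  rw [hL, hPA]
  apply Finset.sum_congr rfl
  intro D hD
  have hb : (if (∀ i : {i : ZMod k // i ≠ 0},
      Jmem k r p om i (if i ∈ D then i.1 - 1 else i.1) (pi i.1 + 1)) then (1 : ℚ) else 0)
      = ∏ i : {i : ZMod k // i ≠ 0},
        (if Jmem k r p om i (if i ∈ D then i.1 - 1 else i.1) (pi i.1 + 1)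
          then (1 : ℚ) else 0) := by
    rw [Finset.prod_boole]
    simp
  rw [hb, ← Finset.prod_filter_mul_prod_filter_not Finset.univ (· ∈ D)]
  have hf1 : Finset.univ.filter (· ∈ D) = D := by
    ext i; simp
  have hf2 : Finset.univ.filter (fun i => ¬ i ∈ D) = Finset.univ \ D := by
    ext i; simp
  rw [hf1, hf2]
  have hp1 : ∏ i ∈ D, (if Jmem k r p om i (if i ∈ D then i.1 - 1 else i.1) (pi i.1 + 1)
      then (1 : ℚ) else 0)
      = ∏ i ∈ D, (if Jmem k r p om i (i.1 - 1) (pi i.1 + 1) then (1 : ℚ) else 0) := by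
    apply Finset.prod_congr rfl
    intro i hi
    rw [if_pos hi]
  have hp2 : ∏ i ∈ Finset.univ \ D,
      (if Jmem k r p om i (if i ∈ D then i.1 - 1 else i.1) (pi i.1 + 1) then (1 : ℚ) else 0)
      = ∏ i ∈ Finset.univ \ D, (if Jmem k r p om i i.1 (pi i.1 + 1) then (1 : ℚ) else 0) := by
    apply Finset.prod_congr rfl
    intro i hi
    rw [Finset.mem_sdiff] at hi
    rw [if_neg hi.2]
  rw [hp1, hp2]
  have hneg : ∏ i ∈ D, (-(if Jmem k r p om i (i.1 - 1) (pi i.1 + 1) then (1 : ℚ) else 0))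
      = (-1 : ℚ) ^ D.card * ∏ i ∈ D, (if Jmem k r p om i (i.1 - 1) (pi i.1 + 1)
        then (1 : ℚ) else 0) := by
    rw [show (fun i : {i : ZMod k // i ≠ 0} =>
        -(if Jmem k r p om i (i.1 - 1) (pi i.1 + 1) then (1 : ℚ) else 0))
      = (fun i => (-1 : ℚ) * (if Jmem k r p om i (i.1 - 1) (pi i.1 + 1) then (1 : ℚ) else 0))
      from funext fun i => by ring]
    rw [Finset.prod_mul_distrib, Finset.prod_const]
  rw [hneg, mul_assoc]

open scoped Classical in
lemma pointwise_main (hk : 1 < k) (p : ZMod k → ℕ) (om : OmS k r p) :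
    (if GIsTree k r (gammaRel k) om.1.1 om.1.2 then (1 : ℚ) else 0) =
    ∑ pi : Equiv.Perm (ZMod k), ((Equiv.Perm.sign pi : ℤ) : ℚ) *
      ∑ D ∈ (Finset.univ : Finset {i : ZMod k // i ≠ 0}).powerset,
        (-1 : ℚ) ^ D.card *
          (if (∀ i : {i : ZMod k // i ≠ 0},
              Jmem k r p om i (if i ∈ D then i.1 - 1 else i.1) (pi i.1 + 1))
            then (1 : ℚ) else 0) := by
  classical
  set Sf : {i : ZMod k // i ≠ 0} → Finset (ZMod k) := fun i => om.1.1 (om.1.2 i) with hSf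
  set g : ZMod k → ZMod k := gfun k hk Sf with hg
  set E : Matrix (ZMod k) (ZMod k) ℚ := Matrix.of (fun x m =>
    if hx : x = 0 then 1 else
      (if Jmem k r p om ⟨x, hx⟩ x (m + 1) then (1 : ℚ) else 0)
      - (if Jmem k r p om ⟨x, hx⟩ (x - 1) (m + 1) then (1 : ℚ) else 0)) with hE
  have hE0 : ∀ m, E 0 m = 1 := fun m => by simp [hE]
  have hEd : ∀ i, i ≠ 0 → ∀ m, E i m - E i (m + 1) =
      (if m = g i - 1 then 1 else 0) - (if m = i - 1 then 1 else 0) := by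
    intro x hx m
    have h := row_diff hk (Sf ⟨x, hx⟩) (gfun_spec hk Sf ⟨x, hx⟩) m
    simp only [hE, Matrix.of_apply, dif_neg hx]
    have c1 : (if Jmem k r p om ⟨x, hx⟩ x (m + 1) then (1 : ℚ) else 0)
        = (if (if x = m + 1 then Sf ⟨x, hx⟩ = Finset.univ
            else cyc k x (m + 1) ⊆ Sf ⟨x, hx⟩) then (1 : ℚ) else 0) :=
      if_congr Iff.rfl rfl rfl
    have c2 : (if Jmem k r p om ⟨x, hx⟩ (x - 1) (m + 1) then (1 : ℚ) else 0)
        = (if (if x - 1 = m + 1 then Sf ⟨x, hx⟩ = Finset.univ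
            else cyc k (x - 1) (m + 1) ⊆ Sf ⟨x, hx⟩) then (1 : ℚ) else 0) :=
      if_congr Iff.rfl rfl rfl
    have c3 : (if Jmem k r p om ⟨x, hx⟩ x (m + 1 + 1) then (1 : ℚ) else 0)
        = (if (if x = m + 1 + 1 then Sf ⟨x, hx⟩ = Finset.univ
            else cyc k x (m + 1 + 1) ⊆ Sf ⟨x, hx⟩) then (1 : ℚ) else 0) :=
      if_congr Iff.rfl rfl rfl
    have c4 : (if Jmem k r p om ⟨x, hx⟩ (x - 1) (m + 1 + 1) then (1 : ℚ) else 0)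
        = (if (if x - 1 = m + 1 + 1 then Sf ⟨x, hx⟩ = Finset.univ
            else cyc k (x - 1) (m + 1 + 1) ⊆ Sf ⟨x, hx⟩) then (1 : ℚ) else 0) :=
      if_congr Iff.rfl rfl rfl
    rw [c1, c2, c3, c4]
    exact h
  have hdet := det_E hk g E hE0 hEd
  have hdetapply : E.det = ∑ pi : Equiv.Perm (ZMod k),
      ((Equiv.Perm.sign pi : ℤ) : ℚ) * ∏ i : ZMod k, E i (pi i) := by
    rw [← Matrix.det_transpose E, Matrix.det_apply]
    apply Finset.sum_congr rfl
    intro σ _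
    rw [Units.smul_def, zsmul_eq_mul]
    push_cast
    rfl
  have hprod : ∀ pi : Equiv.Perm (ZMod k),
      ∏ i : ZMod k, E i (pi i) = ∏ i : {i : ZMod k // i ≠ 0},
          ((if Jmem k r p om i i.1 (pi i.1 + 1) then (1 : ℚ) else 0)
            - (if Jmem k r p om i (i.1 - 1) (pi i.1 + 1) then (1 : ℚ) else 0)) := by
    intro pi
    rw [← Finset.mul_prod_erase Finset.univ _ (Finset.mem_univ (0 : ZMod k)), hE0, one_mul]
    rw [Finset.prod_subtype (Finset.univ.erase (0 : ZMod k))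
      (p := fun x : ZMod k => x ≠ 0) (by intro x; simp)]
    apply Finset.prod_congr rfl
    intro i _
    simp only [hE, Matrix.of_apply, dif_neg i.2]
  have hfinal : ∑ pi : Equiv.Perm (ZMod k), ((Equiv.Perm.sign pi : ℤ) : ℚ) *
      ∑ D ∈ (Finset.univ : Finset {i : ZMod k // i ≠ 0}).powerset,
        (-1 : ℚ) ^ D.card *
          (if (∀ i : {i : ZMod k // i ≠ 0},
              Jmem k r p om i (if i ∈ D then i.1 - 1 else i.1) (pi i.1 + 1))
            then (1 : ℚ) else 0) = (Mg k g).det := by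
    rw [← hdet, hdetapply]
    apply Finset.sum_congr rfl
    intro pi _
    rw [pointwise_det hk p om pi, hprod pi]
  rw [hfinal]
  rw [if_congr (gIsTree_iff hk om.1.1 om.1.2) rfl rfl]
  by_cases htree : ∀ x : ZMod k, ∃ n : ℕ, (gfun k hk (fun i => om.1.1 (om.1.2 i)))^[n] x = 0
  · rw [if_pos htree, detMg_eq_one htree]
  · rw [if_neg htree, detMg_eq_zero htree]

end Pointwise

/-- For `(S,f)` uniform on `Ω`, the probability that `G_γ(S,f)` is a tree equals
`Σ_{π ∈ 𝔖_k} sgn(π) Σ_{D ⊆ [k-1]} (-1)^{|D|} Pr(∩_{i ∈ [k-1]} J^{f(i)}_{c_i(D), π(i)+1})`,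
where `c_i(D) = i - 1` if `i ∈ D` and `c_i(D) = i` otherwise (cyclically modulo `k`). -/
theorem prob_tree_gamma_eq_sum (k r : ℕ) [NeZero k] (hr : 0 < r) (hrk : r < k)
    (p : ZMod k → ℕ)
    (hS : Nonempty {S : Fin r → Finset (ZMod k) // SprMem k r p S}) :
    (Nat.card {om : OmS k r p // GIsTree k r (gammaRel k) om.1.1 om.1.2} : ℚ) /
      (Nat.card (OmS k r p) : ℚ) =
    ∑ pi : Equiv.Perm (ZMod k), ((Equiv.Perm.sign pi : ℤ) : ℚ) *
      ∑ D ∈ (Finset.univ : Finset {i : ZMod k // i ≠ 0}).powerset,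
        (-1 : ℚ) ^ D.card *
          PrU (⋂ i : {i : ZMod k // i ≠ 0},
            {om : OmS k r p |
              Jmem k r p om i (if i ∈ D then i.1 - 1 else i.1) (pi i.1 + 1)}) := by
  classical
  have hk : 1 < k := by omega
  haveI : Fintype (OmS k r p) := Fintype.ofFinite _
  have hcardset : ∀ (P : OmS k r p → Prop), ((Nat.card {om : OmS k r p // P om} : ℕ) : ℚ)
      = ∑ om : OmS k r p, (if P om then (1 : ℚ) else 0) := by
    intro P
    rw [Nat.card_eq_fintype_card, Fintype.card_subtype, Finset.card_filter]
    push_cast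
    rfl
  have hsetcard : ∀ (pi : Equiv.Perm (ZMod k)) (D : Finset {i : ZMod k // i ≠ 0}),
      ((Nat.card (⋂ i : {i : ZMod k // i ≠ 0},
        {om : OmS k r p |
          Jmem k r p om i (if i ∈ D then i.1 - 1 else i.1) (pi i.1 + 1)}) : ℕ) : ℚ)
      = ∑ om : OmS k r p, (if (∀ i : {i : ZMod k // i ≠ 0},
          Jmem k r p om i (if i ∈ D then i.1 - 1 else i.1) (pi i.1 + 1))
          then (1 : ℚ) else 0) := by
    intro pi D
    have h1 : ((Nat.card (⋂ i : {i : ZMod k // i ≠ 0},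
        {om : OmS k r p |
          Jmem k r p om i (if i ∈ D then i.1 - 1 else i.1) (pi i.1 + 1)}) : ℕ) : ℚ)
        = ((Nat.card {om : OmS k r p // om ∈ ⋂ i : {i : ZMod k // i ≠ 0},
          {om : OmS k r p |
            Jmem k r p om i (if i ∈ D then i.1 - 1 else i.1) (pi i.1 + 1)}} : ℕ) : ℚ) := rfl
    rw [h1, hcardset]
    apply Finset.sum_congr rfl
    intro om _
    apply if_congr _ rfl rfl
    rw [Set.mem_iInter]
    constructor
    · intro h i; exact h i
    · intro h i; exact h i
  simp only [PrU]
  have hdiv : ∀ pi : Equiv.Perm (ZMod k),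
      ((Equiv.Perm.sign pi : ℤ) : ℚ) *
        ∑ D ∈ (Finset.univ : Finset {i : ZMod k // i ≠ 0}).powerset,
          (-1 : ℚ) ^ D.card *
            ((Nat.card (⋂ i : {i : ZMod k // i ≠ 0},
              {om : OmS k r p |
                Jmem k r p om i (if i ∈ D then i.1 - 1 else i.1) (pi i.1 + 1)}) : ℚ)
              / (Nat.card (OmS k r p) : ℚ))
      = (((Equiv.Perm.sign pi : ℤ) : ℚ) *
          ∑ D ∈ (Finset.univ : Finset {i : ZMod k // i ≠ 0}).powerset,
            (-1 : ℚ) ^ D.card *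
              (Nat.card (⋂ i : {i : ZMod k // i ≠ 0},
                {om : OmS k r p |
                  Jmem k r p om i (if i ∈ D then i.1 - 1 else i.1) (pi i.1 + 1)}) : ℚ))
          / (Nat.card (OmS k r p) : ℚ) := by
    intro pi
    simp only [← mul_div_assoc, ← Finset.sum_div]
  rw [Finset.sum_congr rfl (fun pi _ => hdiv pi), ← Finset.sum_div]
  have hnum : (Nat.card {om : OmS k r p // GIsTree k r (gammaRel k) om.1.1 om.1.2} : ℚ)
      = ∑ pi : Equiv.Perm (ZMod k), ((Equiv.Perm.sign pi : ℤ) : ℚ) *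
          ∑ D ∈ (Finset.univ : Finset {i : ZMod k // i ≠ 0}).powerset,
            (-1 : ℚ) ^ D.card *
              (Nat.card (⋂ i : {i : ZMod k // i ≠ 0},
                {om : OmS k r p |
                  Jmem k r p om i (if i ∈ D then i.1 - 1 else i.1) (pi i.1 + 1)}) : ℚ) := by
    have hnumer : ∀ pi : Equiv.Perm (ZMod k),
        ((Equiv.Perm.sign pi : ℤ) : ℚ) *
          ∑ D ∈ (Finset.univ : Finset {i : ZMod k // i ≠ 0}).powerset,
            (-1 : ℚ) ^ D.card *
              (Nat.card (⋂ i : {i : ZMod k // i ≠ 0},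
                {om : OmS k r p |
                  Jmem k r p om i (if i ∈ D then i.1 - 1 else i.1) (pi i.1 + 1)}) : ℚ)
        = ∑ om : OmS k r p, ((Equiv.Perm.sign pi : ℤ) : ℚ) *
            ∑ D ∈ (Finset.univ : Finset {i : ZMod k // i ≠ 0}).powerset,
              (-1 : ℚ) ^ D.card *
                (if (∀ i : {i : ZMod k // i ≠ 0},
                  Jmem k r p om i (if i ∈ D then i.1 - 1 else i.1) (pi i.1 + 1))
                  then (1 : ℚ) else 0) := by
      intro pi
      rw [Finset.sum_congr rfl (fun D (_ : D ∈ (Finset.univ :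
        Finset {i : ZMod k // i ≠ 0}).powerset) => by rw [hsetcard pi D])]
      simp only [Finset.mul_sum]
      exact Finset.sum_comm
    rw [hcardset, Finset.sum_congr rfl (fun pi _ => hnumer pi), Finset.sum_comm]
    apply Finset.sum_congr rfl
    intro om _
    exact pointwise_main hk p om
  rw [hnum]
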